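/- arXiv:2105.09718 — 5 statements merged into one kernel-verified Lean document; each statement's English description precedes it below -/
import Mathlib

section
/- Let B, C ∈ B(H). Then w([[0, B], [C, 0]]) ≥ (1/2)·max{‖B‖, ‖C‖} + (1/4)·| ‖B + C*‖ − ‖B − C*‖ |. -/
open ContinuousLinearMap ComplexConjugate

variable {H : Type*} [NormedAddCommGroup H] [InnerProductSpace ℂ H] [CompleteSpace H]

/-- The numerical radius of a bounded linear operator:
`w(T) = sup { |⟨Tx, x⟩| : ‖x‖ = 1 }`. -/
noncomputable def numRadius {E : Type*} [NormedAddCommGroup E] [InnerProductSpace ℂ E]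
    (T : E →L[ℂ] E) : ℝ :=
  sSup {r : ℝ | ∃ x : E, ‖x‖ = 1 ∧ r = ‖(inner ℂ (T x) x : ℂ)‖}

/-- The absolute value `|T| = (T*T)^(1/2)` of a bounded linear operator.
Note `opAbs (adjoint T) = (T T*)^(1/2) = |T*|`. -/
noncomputable def opAbs (T : H →L[ℂ] H) : H →L[ℂ] H := CFC.sqrt (adjoint T * T)

/-- The off-diagonal operator matrix `[[0, B], [C, 0]]` acting on `H ⊕ H`
(with the Hilbert space structure `WithLp 2 (H × H)`) by `(x₁, x₂) ↦ (B x₂, C x₁)`. -/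
noncomputable def offDiag (B C : H →L[ℂ] H) :
    WithLp 2 (H × H) →L[ℂ] WithLp 2 (H × H) :=
  ((WithLp.prodContinuousLinearEquiv 2 ℂ H H).symm : (H × H) →L[ℂ] WithLp 2 (H × H)).comp
    (((B.comp (ContinuousLinearMap.snd ℂ H H)).prod
        (C.comp (ContinuousLinearMap.fst ℂ H H))).comp
      ((WithLp.prodContinuousLinearEquiv 2 ℂ H H) : WithLp 2 (H × H) →L[ℂ] H × H))

section Aux

variable {E : Type*} [NormedAddCommGroup E] [InnerProductSpace ℂ E]

lemma numRadius_bddAbove (T : E →L[ℂ] E) :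
    BddAbove {r : ℝ | ∃ x : E, ‖x‖ = 1 ∧ r = ‖(inner ℂ (T x) x : ℂ)‖} := by
  refine ⟨‖T‖, ?_⟩
  rintro r ⟨x, hx, rfl⟩
  calc ‖(inner ℂ (T x) x : ℂ)‖ ≤ ‖T x‖ * ‖x‖ := norm_inner_le_norm _ _
    _ ≤ (‖T‖ * ‖x‖) * ‖x‖ := by gcongr; exact T.le_opNorm x
    _ = ‖T‖ := by rw [hx]; ring

lemma le_numRadius (T : E →L[ℂ] E) {x : E} (hx : ‖x‖ = 1) :
    ‖(inner ℂ (T x) x : ℂ)‖ ≤ numRadius T :=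
  le_csSup (numRadius_bddAbove T) ⟨x, hx, rfl⟩

lemma inner_le_numRadius (T : E →L[ℂ] E) (z : E) :
    ‖(inner ℂ (T z) z : ℂ)‖ ≤ numRadius T * ‖z‖ ^ 2 := by
  rcases eq_or_ne z 0 with rfl | hz
  · simp
  · have hz' : ‖z‖ ≠ 0 := norm_ne_zero_iff.mpr hz
    set c : ℂ := (‖z‖ : ℂ) with hc
    have hcne : c ≠ 0 := by simpa [hc] using hz'
    set x : E := c⁻¹ • z with hxdef
    have hx : ‖x‖ = 1 := by
      rw [hxdef, norm_smul, norm_inv, hc]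
      simp [hz']
    have hzx : z = c • x := by
      rw [hxdef, smul_smul, mul_inv_cancel₀ hcne, one_smul]
    calc ‖(inner ℂ (T z) z : ℂ)‖ = ‖conj c * (c * (inner ℂ (T x) x : ℂ))‖ := by
          conv_lhs => rw [hzx]
          rw [map_smul, inner_smul_left, inner_smul_right]
      _ = ‖z‖ ^ 2 * ‖(inner ℂ (T x) x : ℂ)‖ := by
          rw [norm_mul, norm_mul, RCLike.norm_conj]
          rw [hc]
          simp [Complex.norm_real]
          ring
      _ ≤ ‖z‖ ^ 2 * numRadius T := by
          have := le_numRadius T hx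
          have h2 : (0:ℝ) ≤ ‖z‖ ^ 2 := sq_nonneg _
          nlinarith
      _ = numRadius T * ‖z‖ ^ 2 := mul_comm _ _

lemma opNorm_le_of_forall_inner (S : E →L[ℂ] E)
    (hsym : ∀ x y : E, (inner ℂ (S x) y : ℂ) = inner ℂ x (S y))
    {M : ℝ} (hM : 0 ≤ M)
    (h : ∀ z : E, ‖(inner ℂ (S z) z : ℂ)‖ ≤ M * ‖z‖ ^ 2) : ‖S‖ ≤ M := by
  refine S.opNorm_le_bound hM fun x => ?_
  rcases eq_or_ne (S x) 0 with hSx | hSx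
  · rw [hSx, norm_zero]
    positivity
  · have hSx' : (0:ℝ) < ‖S x‖ := norm_pos_iff.mpr hSx
    have hx0 : x ≠ 0 := by rintro rfl; simp at hSx
    have hxn : (0:ℝ) < ‖x‖ := norm_pos_iff.mpr hx0
    set y : E := ((‖x‖ / ‖S x‖ : ℝ) : ℂ) • S x with hy
    have hyn : ‖y‖ = ‖x‖ := by
      rw [hy, norm_smul, Complex.norm_real, Real.norm_eq_abs,
        abs_of_nonneg (div_nonneg hxn.le hSx'.le), div_mul_cancel₀ _ hSx'.ne']
    have key : (inner ℂ (S (x+y)) (x+y) : ℂ) - inner ℂ (S (x-y)) (x-y)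
        = 2 * inner ℂ (S x) y + 2 * inner ℂ (S y) x := by
      simp only [map_add, map_sub, inner_add_left, inner_add_right,
        inner_sub_left, inner_sub_right]
      ring
    have hconj : (inner ℂ (S y) x : ℂ) = conj (inner ℂ (S x) y) := by
      rw [hsym y x, ← inner_conj_symm]
    have hre : (inner ℂ (S x) y : ℂ).re = ‖x‖ * ‖S x‖ := by
      have hval : (inner ℂ (S x) y : ℂ) = ((‖x‖ * ‖S x‖ : ℝ) : ℂ) := by
        rw [hy, inner_smul_right, inner_self_eq_norm_sq_to_K]
        have hne : (‖S x‖ : ℂ) ≠ 0 := by exact_mod_cast hSx'.ne'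
        push_cast
        field_simp
        norm_cast
        simp
      rw [hval, Complex.ofReal_re]
    have hre_key : ((inner ℂ (S (x+y)) (x+y) : ℂ) - inner ℂ (S (x-y)) (x-y)).re
        = 4 * (‖x‖ * ‖S x‖) := by
      rw [key, hconj, ← hre]
      set w : ℂ := inner ℂ (S x) y
      simp [Complex.add_re, Complex.mul_re, Complex.conj_re, Complex.conj_im]
      ring
    have h1 : |(inner ℂ (S (x+y)) (x+y) : ℂ).re| ≤ M * ‖x+y‖ ^ 2 :=
      le_trans (Complex.abs_re_le_norm _) (h _)
    have h2 : |(inner ℂ (S (x-y)) (x-y) : ℂ).re| ≤ M * ‖x-y‖ ^ 2 :=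
      le_trans (Complex.abs_re_le_norm _) (h _)
    have par := parallelogram_law_with_norm ℂ x y
    have habs1 := abs_le.mp h1
    have habs2 := abs_le.mp h2
    have hsum : 4 * (‖x‖ * ‖S x‖) ≤ M * ‖x+y‖ ^ 2 + M * ‖x-y‖ ^ 2 := by
      rw [← hre_key, Complex.sub_re]
      linarith [habs1.2, habs2.1]
    have par2 : ‖x+y‖ ^ 2 + ‖x-y‖ ^ 2 = 4 * (‖x‖ * ‖x‖) := by
      rw [hyn] at par
      rw [pow_two, pow_two]
      linarith
    have hsum2 : 4 * (‖x‖ * ‖S x‖) ≤ 4 * M * (‖x‖ * ‖x‖) := by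
      nlinarith [hsum, par2, hM]
    nlinarith [hsum2, hxn, mul_pos hxn hxn]

end Aux

section OffDiag

lemma offDiag_apply (B C : H →L[ℂ] H) (z : WithLp 2 (H × H)) :
    offDiag B C z = (WithLp.equiv 2 (H × H)).symm (B z.snd, C z.fst) := rfl

lemma adjoint_offDiag (B C : H →L[ℂ] H) :
    adjoint (offDiag B C) = offDiag (adjoint C) (adjoint B) := by
  symm
  rw [eq_adjoint_iff]
  intro x y
  rw [offDiag_apply, offDiag_apply, WithLp.prod_inner_apply, WithLp.prod_inner_apply]
  simp only [WithLp.equiv_symm_apply, WithLp.toLp_fst, WithLp.toLp_snd, adjoint_inner_left, WithLp.ofLp_fst, WithLp.ofLp_snd]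
  ring

lemma offDiag_add (B C B' C' : H →L[ℂ] H) :
    offDiag B C + offDiag B' C' = offDiag (B + B') (C + C') := by
  ext z
  rfl

lemma offDiag_norm_fst_le (B C : H →L[ℂ] H) : ‖B‖ ≤ ‖offDiag B C‖ := by
  refine B.opNorm_le_bound (norm_nonneg _) fun u => ?_
  have h1 : offDiag B C ((WithLp.equiv 2 (H × H)).symm (0, u))
      = (WithLp.equiv 2 (H × H)).symm (B u, 0) := by
    rw [offDiag_apply]
    simp
  have h2 : ‖B u‖ = ‖offDiag B C ((WithLp.equiv 2 (H × H)).symm (0, u))‖ := by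
    rw [h1, WithLp.equiv_symm_apply, WithLp.norm_toLp_fst]
  rw [h2]
  calc ‖offDiag B C ((WithLp.equiv 2 (H × H)).symm (0, u))‖
      ≤ ‖offDiag B C‖ * ‖(WithLp.equiv 2 (H × H)).symm (0, u)‖ := le_opNorm _ _
    _ = ‖offDiag B C‖ * ‖u‖ := by rw [WithLp.equiv_symm_apply, WithLp.norm_toLp_snd]

end OffDiag

set_option maxHeartbeats 1000000 in
theorem stmt_2 (B C : H →L[ℂ] H) :
    (1 / 2) * max ‖B‖ ‖C‖ + (1 / 4) * |‖B + adjoint C‖ - ‖B - adjoint C‖| ≤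
      numRadius (offDiag B C) := by
  set T := offDiag B C with hT
  set w := numRadius T with hw
  rcases subsingleton_or_nontrivial H with hsub | hnt
  · have hB : B = 0 := Subsingleton.elim _ _
    have hC : C = 0 := Subsingleton.elim _ _
    have hw0 : w = 0 := by
      rw [hw, numRadius]
      convert Real.sSup_empty
      rw [Set.eq_empty_iff_forall_notMem]
      rintro r ⟨x, hx, -⟩
      haveI : Subsingleton (H × H) := instSubsingletonProd
      haveI : Subsingleton (WithLp 2 (H × H)) := (WithLp.equiv 2 (H × H)).subsingleton
      have : x = 0 := Subsingleton.elim _ _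
      rw [this, norm_zero] at hx
      norm_num at hx
    rw [hB, hC, hw0]
    simp
  · -- nontrivial case
    have hw0 : 0 ≤ w := by
      obtain ⟨x, hx⟩ := exists_norm_eq H (zero_le_one (α := ℝ))
      have hz : ‖(WithLp.equiv 2 (H × H)).symm (x, 0)‖ = 1 := by
        rw [WithLp.equiv_symm_apply, WithLp.norm_toLp_fst, hx]
      exact le_trans (norm_nonneg _) (le_numRadius T hz)
    -- Claim 1 : ‖B + adjoint C‖ ≤ 2 * w
    have hS : T + adjoint T = offDiag (B + adjoint C) (C + adjoint B) := by
      rw [hT, adjoint_offDiag, offDiag_add]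
    have hsymS : ∀ x y : WithLp 2 (H × H),
        (inner ℂ ((T + adjoint T) x) y : ℂ) = inner ℂ x ((T + adjoint T) y) := by
      intro x y
      simp only [add_apply, inner_add_left, inner_add_right, adjoint_inner_left,
        adjoint_inner_right]
      ring
    have hboundS : ∀ z : WithLp 2 (H × H),
        ‖(inner ℂ ((T + adjoint T) z) z : ℂ)‖ ≤ (2 * w) * ‖z‖ ^ 2 := by
      intro z
      have : (inner ℂ ((T + adjoint T) z) z : ℂ)
          = inner ℂ (T z) z + conj (inner ℂ (T z) z : ℂ) := by
        rw [add_apply, inner_add_left, adjoint_inner_left, inner_conj_symm]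
      rw [this]
      calc ‖(inner ℂ (T z) z : ℂ) + conj (inner ℂ (T z) z : ℂ)‖
          ≤ ‖(inner ℂ (T z) z : ℂ)‖ + ‖conj (inner ℂ (T z) z : ℂ)‖ := norm_add_le _ _
        _ = 2 * ‖(inner ℂ (T z) z : ℂ)‖ := by rw [RCLike.norm_conj]; ring
        _ ≤ 2 * (w * ‖z‖ ^ 2) := by
            have := inner_le_numRadius T z
            linarith
        _ = (2 * w) * ‖z‖ ^ 2 := by ring
    have claim1 : ‖B + adjoint C‖ ≤ 2 * w := by
      calc ‖B + adjoint C‖ ≤ ‖T + adjoint T‖ := by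
            rw [hS]; exact offDiag_norm_fst_le _ _
        _ ≤ 2 * w := opNorm_le_of_forall_inner _ hsymS (by linarith) hboundS
    -- Claim 2 : ‖B - adjoint C‖ ≤ 2 * w
    have hD : T - adjoint T = offDiag (B - adjoint C) (C - adjoint B) := by
      rw [hT, adjoint_offDiag]
      ext z
      rfl
    set D : WithLp 2 (H × H) →L[ℂ] WithLp 2 (H × H) := Complex.I • (T - adjoint T) with hDdef
    have hsymD : ∀ x y : WithLp 2 (H × H), (inner ℂ (D x) y : ℂ) = inner ℂ x (D y) := by
      intro x y
      rw [hDdef]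
      simp only [smul_apply, sub_apply, inner_smul_left, inner_smul_right,
        inner_sub_left, inner_sub_right, adjoint_inner_left, adjoint_inner_right,
        Complex.conj_I]
      ring
    have hboundD : ∀ z : WithLp 2 (H × H),
        ‖(inner ℂ (D z) z : ℂ)‖ ≤ (2 * w) * ‖z‖ ^ 2 := by
      intro z
      have hDz : (inner ℂ (D z) z : ℂ)
          = (starRingEnd ℂ) Complex.I * ((inner ℂ (T z) z : ℂ) - conj (inner ℂ (T z) z : ℂ)) := by
        rw [hDdef]
        rw [smul_apply, inner_smul_left, sub_apply, inner_sub_left, adjoint_inner_left,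
          inner_conj_symm]
      rw [hDz, norm_mul]
      have hI : ‖(starRingEnd ℂ) Complex.I‖ = 1 := by simp
      rw [hI, one_mul]
      calc ‖(inner ℂ (T z) z : ℂ) - conj (inner ℂ (T z) z : ℂ)‖
          ≤ ‖(inner ℂ (T z) z : ℂ)‖ + ‖conj (inner ℂ (T z) z : ℂ)‖ := norm_sub_le _ _
        _ = 2 * ‖(inner ℂ (T z) z : ℂ)‖ := by rw [RCLike.norm_conj]; ring
        _ ≤ 2 * (w * ‖z‖ ^ 2) := by
            have := inner_le_numRadius T z
            linarith
        _ = (2 * w) * ‖z‖ ^ 2 := by ring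
    have claim2 : ‖B - adjoint C‖ ≤ 2 * w := by
      have hnD : ‖B - adjoint C‖ ≤ ‖D‖ := by
        have h1 : ‖B - adjoint C‖ ≤ ‖T - adjoint T‖ := by
          rw [hD]; exact offDiag_norm_fst_le _ _
        have h2 : ‖D‖ = ‖T - adjoint T‖ := by
          rw [hDdef, norm_smul Complex.I (T - adjoint T), Complex.norm_I, one_mul]
        rw [h2]; exact h1
      exact le_trans hnD (opNorm_le_of_forall_inner _ hsymD (by linarith) hboundD)
    -- arithmetic
    have hadj : ‖adjoint C‖ = ‖C‖ := LinearIsometryEquiv.norm_map adjoint C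
    have hBa : 2 * ‖B‖ ≤ ‖B + adjoint C‖ + ‖B - adjoint C‖ := by
      have hsum : B + B = (B + adjoint C) + (B - adjoint C) := by abel
      have h2B : ‖B + B‖ = 2 * ‖B‖ := by
        have h2 : B + B = (2 : ℝ) • B := by
          rw [two_smul]
        rw [h2, norm_smul ((2:ℝ)) B]
        norm_num
      rw [← h2B, hsum]
      exact norm_add_le _ _
    have hCa : 2 * ‖C‖ ≤ ‖B + adjoint C‖ + ‖B - adjoint C‖ := by
      have hsum : adjoint C + adjoint C = (B + adjoint C) - (B - adjoint C) := by abel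
      have h2C : ‖adjoint C + adjoint C‖ = 2 * ‖C‖ := by
        have h2 : adjoint C + adjoint C = (2 : ℝ) • adjoint C := by
          rw [two_smul]
        rw [h2, norm_smul ((2:ℝ)) (adjoint C), hadj]
        norm_num
      rw [← h2C, hsum]
      exact norm_sub_le _ _
    rcases abs_cases (‖B + adjoint C‖ - ‖B - adjoint C‖) with ⟨he, -⟩ | ⟨he, -⟩ <;>
      rcases max_cases ‖B‖ ‖C‖ with ⟨hm, -⟩ | ⟨hm, -⟩ <;>
      rw [he, hm] <;> linarith
end

section
/- Let B ∈ B(H). Then w(B) ≥ ‖B‖/2 + (1/4)·| ‖B + B*‖ − ‖B − B*‖ |. -/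
open ContinuousLinearMap

variable {H : Type*} [NormedAddCommGroup H] [InnerProductSpace ℂ H] [CompleteSpace H]

lemma selfadj_norm_le {A : H →L[ℂ] H} (hA : IsSelfAdjoint A) {M : ℝ} (hM : 0 ≤ M)
    (h : ∀ x : H, ‖x‖ = 1 → ‖(inner ℂ (A x) x : ℂ)‖ ≤ M) : ‖A‖ ≤ M := by
  have h1 : ∀ x : H, ‖(inner ℂ (A x) x : ℂ)‖ ≤ M * ‖x‖ ^ 2 := by
    intro x
    by_cases hx : x = 0
    · simp [hx]
    · have hnx : (0 : ℝ) < ‖x‖ := norm_pos_iff.2 hx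
      set u : H := (‖x‖⁻¹ : ℂ) • x with hu
      have hux : x = (‖x‖ : ℂ) • u := by
        rw [hu, smul_smul, mul_inv_cancel₀ (by exact_mod_cast hnx.ne'), one_smul]
      have hun : ‖u‖ = 1 := by rw [hu, norm_smul]; simp [hnx.ne']
      have hb := h u hun
      calc ‖(inner ℂ (A x) x : ℂ)‖
          = ‖(inner ℂ (A ((‖x‖ : ℂ) • u)) ((‖x‖ : ℂ) • u) : ℂ)‖ := by rw [← hux]
        _ = ‖x‖ ^ 2 * ‖(inner ℂ (A u) u : ℂ)‖ := by
            rw [map_smul, inner_smul_left, inner_smul_right, norm_mul, norm_mul]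
            simp [Complex.norm_real]
            ring
        _ ≤ ‖x‖ ^ 2 * M := mul_le_mul_of_nonneg_left hb (by positivity)
        _ = M * ‖x‖ ^ 2 := by ring
  have hsym := hA.isSymmetric
  have h2 : ∀ x y : H, 4 * RCLike.re (inner ℂ (A x) y : ℂ)
      = RCLike.re (inner ℂ (A (x + y)) (x + y) : ℂ)
        - RCLike.re (inner ℂ (A (x - y)) (x - y) : ℂ) := by
    intro x y
    have hyx : RCLike.re (inner ℂ (A y) x : ℂ) = RCLike.re (inner ℂ (A x) y : ℂ) := by
      have h' := hsym y x
      simp only [ContinuousLinearMap.coe_coe] at h'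
      rw [h', inner_re_symm]
    simp only [map_add, map_sub, inner_add_left, inner_add_right, inner_sub_left,
      inner_sub_right]
    linarith [hyx]
  have key : ∀ x : H, ‖A x‖ ≤ M * ‖x‖ := by
    intro x
    by_cases hAx : A x = 0
    · rw [hAx, norm_zero]; positivity
    · have hx : x ≠ 0 := by rintro rfl; simp at hAx
      have hnx : (0 : ℝ) < ‖x‖ := norm_pos_iff.2 hx
      have hnAx : (0 : ℝ) < ‖A x‖ := norm_pos_iff.2 hAx
      set c : ℝ := ‖x‖ / ‖A x‖ with hc
      have hc0 : 0 ≤ c := by positivity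
      set y : H := (c : ℂ) • A x with hy
      have hny : ‖y‖ = ‖x‖ := by
        rw [hy, norm_smul, Complex.norm_real, Real.norm_eq_abs, abs_of_nonneg hc0, hc]
        field_simp
      have hre : RCLike.re (inner ℂ (A x) y : ℂ) = ‖x‖ * ‖A x‖ := by
        have hself : (inner ℂ (A x) (A x) : ℂ).re = ‖A x‖ ^ 2 := by
          have h6 := inner_self_eq_norm_sq (𝕜 := ℂ) (A x)
          simpa using h6
        rw [hy, inner_smul_right]
        simp only [RCLike.re_to_complex, Complex.re_ofReal_mul, hself, hc]
        field_simp
      have hb1 : RCLike.re (inner ℂ (A (x + y)) (x + y) : ℂ) ≤ M * ‖x + y‖ ^ 2 :=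
        (le_abs_self _).trans ((RCLike.abs_re_le_norm _).trans (h1 _))
      have hb2 : -(M * ‖x - y‖ ^ 2) ≤ RCLike.re (inner ℂ (A (x - y)) (x - y) : ℂ) := by
        have h' := (RCLike.abs_re_le_norm (inner ℂ (A (x - y)) (x - y) : ℂ)).trans (h1 (x - y))
        linarith [neg_abs_le (RCLike.re (inner ℂ (A (x - y)) (x - y) : ℂ))]
      have hparallel : ‖x + y‖ ^ 2 + ‖x - y‖ ^ 2 = 4 * ‖x‖ ^ 2 := by
        have hp := parallelogram_law_with_norm ℂ x y
        rw [hny] at hp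
        linarith
      have hM4 : M * ‖x + y‖ ^ 2 + M * ‖x - y‖ ^ 2 = 4 * (M * ‖x‖ ^ 2) := by
        have h5 := congrArg (fun t => M * t) hparallel
        simp only [mul_add] at h5
        linarith [h5]
      have hfin : 4 * (‖x‖ * ‖A x‖) ≤ 4 * (M * ‖x‖ ^ 2) := by
        rw [← hre, h2 x y]
        linarith [hb1, hb2, hM4]
      nlinarith [hfin, hnx]
  exact A.opNorm_le_bound hM key

theorem stmt_3 (B : H →L[ℂ] H) :
    ‖B‖ / 2 + (1 / 4) * |‖B + adjoint B‖ - ‖B - adjoint B‖| ≤ numRadius B := by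
  by_cases hex : ∃ x : H, ‖x‖ = 1
  · obtain ⟨x₀, hx₀⟩ := hex
    have hbdd : BddAbove {r : ℝ | ∃ x : H, ‖x‖ = 1 ∧ r = ‖(inner ℂ (B x) x : ℂ)‖} := by
      refine ⟨‖B‖, ?_⟩
      rintro r ⟨x, hx, rfl⟩
      calc ‖(inner ℂ (B x) x : ℂ)‖ ≤ ‖B x‖ * ‖x‖ := norm_inner_le_norm _ _
        _ ≤ ‖B‖ * ‖x‖ * ‖x‖ := by gcongr; exact B.le_opNorm x
        _ = ‖B‖ := by rw [hx]; ring
    have hmem : ∀ x : H, ‖x‖ = 1 → ‖(inner ℂ (B x) x : ℂ)‖ ≤ numRadius B := fun x hx =>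
      le_csSup hbdd ⟨x, hx, rfl⟩
    have hw0 : 0 ≤ numRadius B := le_trans (norm_nonneg _) (hmem x₀ hx₀)
    have hadj : ∀ x : H, ‖(inner ℂ ((adjoint B) x) x : ℂ)‖ = ‖(inner ℂ (B x) x : ℂ)‖ := by
      intro x
      rw [adjoint_inner_left, ← inner_conj_symm, RCLike.norm_conj]
    have ha : ‖B + adjoint B‖ ≤ 2 * numRadius B := by
      refine selfadj_norm_le ?_ (by linarith) ?_
      · rw [IsSelfAdjoint, ← star_eq_adjoint]
        exact IsSelfAdjoint.add_star_self B
      · intro x hx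
        have he : (B + adjoint B) x = B x + (adjoint B) x := rfl
        rw [he, inner_add_left]
        calc ‖(inner ℂ (B x) x : ℂ) + (inner ℂ ((adjoint B) x) x : ℂ)‖
            ≤ ‖(inner ℂ (B x) x : ℂ)‖ + ‖(inner ℂ ((adjoint B) x) x : ℂ)‖ := norm_add_le _ _
          _ ≤ numRadius B + numRadius B := by
              rw [hadj]; exact add_le_add (hmem x hx) (hmem x hx)
          _ = 2 * numRadius B := by ring
    have hb : ‖B - adjoint B‖ ≤ 2 * numRadius B := by
      have hAeq : ‖Complex.I • (B - adjoint B)‖ = ‖B - adjoint B‖ := by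
        rw [norm_smul, Complex.norm_I, one_mul]
      rw [← hAeq]
      refine selfadj_norm_le ?_ (by linarith) ?_
      · rw [IsSelfAdjoint, star_smul, star_sub, star_eq_adjoint, star_eq_adjoint,
          adjoint_adjoint, Complex.star_def, Complex.conj_I, neg_smul, smul_sub, smul_sub,
          neg_sub]
      · intro x hx
        have he : (Complex.I • (B - adjoint B)) x = Complex.I • ((B - adjoint B) x) := rfl
        rw [he, inner_smul_left]
        rw [norm_mul]
        have hcI : ‖(starRingEnd ℂ) Complex.I‖ = 1 := by simp
        rw [hcI, one_mul]
        have he2 : (B - adjoint B) x = B x - (adjoint B) x := rfl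
        rw [he2, inner_sub_left]
        calc ‖(inner ℂ (B x) x : ℂ) - (inner ℂ ((adjoint B) x) x : ℂ)‖
            ≤ ‖(inner ℂ (B x) x : ℂ)‖ + ‖(inner ℂ ((adjoint B) x) x : ℂ)‖ := norm_sub_le _ _
          _ ≤ numRadius B + numRadius B := by
              rw [hadj]; exact add_le_add (hmem x hx) (hmem x hx)
          _ = 2 * numRadius B := by ring
    have hB2 : 2 * ‖B‖ ≤ ‖B + adjoint B‖ + ‖B - adjoint B‖ := by
      have hsum : (B + adjoint B) + (B - adjoint B) = B + B := by abel
      have h1 : ‖B + B‖ ≤ ‖B + adjoint B‖ + ‖B - adjoint B‖ := by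
        rw [← hsum]; exact norm_add_le _ _
      have h2 : ‖B + B‖ = 2 * ‖B‖ := by
        rw [← two_smul ℝ B, norm_smul]; simp
      linarith
    rcases abs_cases (‖B + adjoint B‖ - ‖B - adjoint B‖) with ⟨habs, -⟩ | ⟨habs, -⟩ <;>
      rw [habs] <;> linarith
  · have hall : ∀ x : H, x = 0 := by
      intro x
      by_contra hx
      have hnx : ‖x‖ ≠ 0 := norm_ne_zero_iff.2 hx
      exact hex ⟨(‖x‖⁻¹ : ℂ) • x, by rw [norm_smul]; simp [hnx]⟩
    have hB : B = 0 := by ext x; rw [hall x]; simp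
    have hset : {r : ℝ | ∃ x : H, ‖x‖ = 1 ∧ r = ‖(inner ℂ (B x) x : ℂ)‖} = ∅ := by
      ext r
      simp only [Set.mem_setOf_eq, Set.mem_empty_iff_false, iff_false]
      rintro ⟨x, hx, -⟩
      exact hex ⟨x, hx⟩
    have hnr : numRadius B = 0 := by rw [numRadius, hset, Real.sSup_empty]
    rw [hnr, hB, ← star_eq_adjoint, star_zero]
    norm_num
end

section
/- Let B, C ∈ B(H). If |B||C*| = 0 and |B*||C| = 0, then w([[0, B], [C, 0]])² = (1/4)·max{ ‖|B|² + |C*|²‖, ‖|B*|² + |C|²‖ }. -/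
open ContinuousLinearMap

variable {H : Type*} [NormedAddCommGroup H] [InnerProductSpace ℂ H] [CompleteSpace H]

set_option maxHeartbeats 1000000
set_option synthInstance.maxHeartbeats 100000

section Aux

lemma aux_mul_star_self_eq_zero (a : H →L[ℂ] H) (h : a * star a = 0) : a = 0 := by
  have : ‖a‖ * ‖a‖ = 0 := by rw [← CStarRing.norm_self_mul_star, h, norm_zero]
  simpa using norm_eq_zero.mp (mul_self_eq_zero.mp this)

lemma aux_star_mul_self_eq_zero (a : H →L[ℂ] H) (h : star a * a = 0) : a = 0 := by
  have : star a = 0 := aux_mul_star_self_eq_zero (star a) (by rwa [star_star])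
  simpa using congrArg star this

lemma aux_key_mul_zero (X Y : H →L[ℂ] H)
    (h : CFC.sqrt (star X * X) * CFC.sqrt (Y * star Y) = 0) : X * Y = 0 := by
  set p := CFC.sqrt (star X * X) with hp
  set q := CFC.sqrt (Y * star Y) with hq
  have hpnn : (0:H→L[ℂ]H) ≤ p := CFC.sqrt_nonneg _
  have hqnn : (0:H→L[ℂ]H) ≤ q := CFC.sqrt_nonneg _
  have hpsa : star p = p := (IsSelfAdjoint.of_nonneg hpnn).star_eq
  have hqsa : star q = q := (IsSelfAdjoint.of_nonneg hqnn).star_eq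
  have hp2 : p * p = star X * X := CFC.sqrt_mul_sqrt_self _ (star_mul_self_nonneg X)
  have hq2 : q * q = Y * star Y := CFC.sqrt_mul_sqrt_self _ (mul_star_self_nonneg Y)
  have hqp : q * p = 0 := by
    have := congrArg star h
    rwa [star_mul, hpsa, hqsa, star_zero] at this
  have hXq : X * q = 0 := by
    apply aux_star_mul_self_eq_zero
    calc star (X * q) * (X * q) = q * (star X * X) * q := by
          rw [star_mul, hqsa]; noncomm_ring
    _ = (q * p) * (p * q) := by rw [← hp2]; noncomm_ring
    _ = 0 := by rw [hqp, zero_mul]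
  apply aux_mul_star_self_eq_zero
  calc (X * Y) * star (X * Y) = X * (Y * star Y) * star X := by
        rw [star_mul]; noncomm_ring
  _ = (X * q) * (q * star X) := by rw [← hq2]; noncomm_ring
  _ = 0 := by rw [hXq, zero_mul]

lemma aux_sq_le_norm_smul (P : H →L[ℂ] H) (hP : 0 ≤ P) : P * P ≤ ‖P‖ • P := by
  have h := CStarAlgebra.star_left_conjugate_le_norm_smul (a := CFC.sqrt P) (b := P)
    (IsSelfAdjoint.of_nonneg hP)
  have hs : star (CFC.sqrt P) = CFC.sqrt P := (IsSelfAdjoint.of_nonneg (CFC.sqrt_nonneg _)).star_eq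
  have h2 : CFC.sqrt P * CFC.sqrt P = P := CFC.sqrt_mul_sqrt_self _ hP
  rw [hs] at h
  generalize hgen : CFC.sqrt P = s at *
  calc P * P = s * P * s := by rw [← h2]; noncomm_ring
  _ ≤ ‖P‖ • (s * s) := h
  _ = ‖P‖ • P := by rw [h2]

lemma aux_norm_add_of_orth (P Q : H →L[ℂ] H) (hP : 0 ≤ P) (hQ : 0 ≤ Q) (hPQ : P * Q = 0) :
    ‖P + Q‖ = max ‖P‖ ‖Q‖ := by
  have hPsa : star P = P := (IsSelfAdjoint.of_nonneg hP).star_eq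
  have hQsa : star Q = Q := (IsSelfAdjoint.of_nonneg hQ).star_eq
  have hQP : Q * P = 0 := by
    have := congrArg star hPQ
    rwa [star_mul, hPsa, hQsa, star_zero] at this
  set m := max ‖P‖ ‖Q‖ with hm
  have hmnn : 0 ≤ m := le_trans (norm_nonneg P) (le_max_left _ _)
  have hsum_sa : star (P + Q) = P + Q := by rw [star_add, hPsa, hQsa]
  refine le_antisymm ?_ (max_le ?_ ?_)
  · have key : (P + Q) * (P + Q) ≤ m • (P + Q) := by
      have expand : (P + Q) * (P + Q) = P * P + Q * Q := by
        rw [add_mul, mul_add, mul_add, hPQ, hQP]; abel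
      rw [expand, smul_add]
      exact add_le_add
        (le_trans (aux_sq_le_norm_smul P hP) (smul_le_smul_of_nonneg_right (le_max_left _ _) hP))
        (le_trans (aux_sq_le_norm_smul Q hQ) (smul_le_smul_of_nonneg_right (le_max_right _ _) hQ))
    have h0 : (0:H→L[ℂ]H) ≤ (P + Q) * (P + Q) := by
      have := star_mul_self_nonneg (P + Q); rwa [hsum_sa] at this
    have h1 : ‖(P + Q) * (P + Q)‖ ≤ m * ‖P + Q‖ := by
      calc ‖(P + Q) * (P + Q)‖ ≤ ‖m • (P + Q)‖ :=
            CStarAlgebra.norm_le_norm_of_nonneg_of_le h0 key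
      _ = m * ‖P + Q‖ := by rw [norm_smul, Real.norm_of_nonneg hmnn]
    have h2 : ‖(P + Q) * (P + Q)‖ = ‖P + Q‖ * ‖P + Q‖ := by
      nth_rewrite 1 [← hsum_sa]
      rw [CStarRing.norm_star_mul_self]
    nlinarith [norm_nonneg (P + Q)]
  · exact CStarAlgebra.norm_le_norm_of_nonneg_of_le hP (le_add_of_nonneg_right hQ)
  · exact CStarAlgebra.norm_le_norm_of_nonneg_of_le hQ (le_add_of_nonneg_left hP)

lemma aux_sq_eq_one {a : ℝ} (h0 : 0 ≤ a) (h : a ^ 2 = 1) : a = 1 := by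
  have := Real.sqrt_sq h0
  rw [h, Real.sqrt_one] at this
  exact this.symm

-- membership: every `‖⟪Tξ,ξ⟫‖` with `ξ` unit belongs to the defining set, bounded by ‖T‖
lemma aux_bddAbove {E : Type*} [NormedAddCommGroup E] [InnerProductSpace ℂ E]
    (T : E →L[ℂ] E) : BddAbove {r : ℝ | ∃ x : E, ‖x‖ = 1 ∧ r = ‖(inner ℂ (T x) x : ℂ)‖} := by
  refine ⟨‖T‖, fun r hr => ?_⟩
  obtain ⟨x, hx, rfl⟩ := hr
  calc ‖(inner ℂ (T x) x : ℂ)‖ ≤ ‖T x‖ * ‖x‖ := norm_inner_le_norm _ _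
  _ ≤ (‖T‖ * ‖x‖) * ‖x‖ := by
      have := T.le_opNorm x
      nlinarith [norm_nonneg x]
  _ = ‖T‖ := by rw [hx]; ring

lemma aux_offDiag_fst (B C : H →L[ℂ] H) (x : WithLp 2 (H × H)) :
    (offDiag B C x).fst = B x.snd := rfl

lemma aux_offDiag_snd (B C : H →L[ℂ] H) (x : WithLp 2 (H × H)) :
    (offDiag B C x).snd = C x.fst := rfl

-- lower bound: one-sided estimate
lemma aux_lower (B C : H →L[ℂ] H) [Nontrivial H] (hCB : C * B = 0)
    (hS0 : 0 ≤ numRadius (offDiag B C)) :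
    ‖B‖ ≤ 2 * numRadius (offDiag B C) := by
  set T := offDiag B C with hT
  set S := {r : ℝ | ∃ x : WithLp 2 (H × H), ‖x‖ = 1 ∧ r = ‖(inner ℂ (T x) x : ℂ)‖} with hS
  have hbdd : BddAbove S := aux_bddAbove T
  refine opNorm_le_bound _ (by positivity) fun x => ?_
  by_cases hx : x = 0
  · simp [hx]
  · set c : ℂ := ((‖x‖ : ℝ) : ℂ)⁻¹ with hc
    have hxnorm : (0:ℝ) < ‖x‖ := norm_pos_iff.mpr hx
    set u : H := c • x with hu
    have hun : ‖u‖ = 1 := by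
      rw [hu, norm_smul, hc, norm_inv, Complex.norm_real, Real.norm_of_nonneg hxnorm.le]
      field_simp
    by_cases hBu : B u = 0
    · have : B x = 0 := by
        have : B x = ((‖x‖ : ℝ) : ℂ) • B u := by
          rw [hu, map_smul, smul_smul, hc]
          rw [mul_inv_cancel₀ (by exact_mod_cast hxnorm.ne')]
          simp
        rw [this, hBu, smul_zero]
      rw [this, norm_zero]
      positivity
    · -- the unit vector y in the direction of B u
      have hBun : (0:ℝ) < ‖B u‖ := norm_pos_iff.mpr hBu
      set y : H := ((‖B u‖ : ℝ) : ℂ)⁻¹ • B u with hy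
      have hyn : ‖y‖ = 1 := by
        rw [hy, norm_smul, norm_inv, Complex.norm_real, Real.norm_of_nonneg hBun.le]
        field_simp
      set η : WithLp 2 (H × H) := (WithLp.equiv 2 (H × H)).symm (y, u) with hη
      have hηfst : η.fst = y := rfl
      have hηsnd : η.snd = u := rfl
      have hηn2 : ‖η‖ ^ 2 = 2 := by
        rw [WithLp.prod_norm_sq_eq_of_L2, hηfst, hηsnd, hyn, hun]; norm_num
      have hηn : ‖η‖ = Real.sqrt 2 := by
        rw [← Real.sqrt_sq (norm_nonneg η), hηn2]
      set a : ℂ := ((Real.sqrt 2 : ℝ) : ℂ)⁻¹ with ha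
      set ξ : WithLp 2 (H × H) := a • η with hξ
      have hs2 : (0:ℝ) < Real.sqrt 2 := Real.sqrt_pos.mpr (by norm_num)
      have hξn : ‖ξ‖ = 1 := by
        rw [hξ, norm_smul, ha, norm_inv, Complex.norm_real,
          Real.norm_of_nonneg hs2.le, hηn]
        field_simp
      -- compute the inner product
      have hCy : C y = 0 := by
        have : C (B u) = 0 := by
          have := congrArg (fun f => f u) hCB
          simpa [ContinuousLinearMap.mul_apply] using this
        rw [hy, map_smul, this, smul_zero]
      have hinner_η : (inner ℂ (T η) η : ℂ) = (‖B u‖ : ℂ) := by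
        rw [WithLp.prod_inner_apply]
        change inner ℂ (T η).fst η.fst + inner ℂ (T η).snd η.snd = _
        have h1 : (T η).fst = B u := by rw [hT, aux_offDiag_fst, hηsnd]
        have h2 : (T η).snd = C y := by rw [hT, aux_offDiag_snd, hηfst]
        rw [h1, h2, hηfst, hηsnd, hCy, inner_zero_left, add_zero, hy, inner_smul_right,
          inner_self_eq_norm_sq_to_K]
        have hne : ((‖B u‖ : ℝ) : ℂ) ≠ 0 := by exact_mod_cast hBun.ne'
        field_simp
        rfl
      have hinner_ξ : ‖(inner ℂ (T ξ) ξ : ℂ)‖ = ‖B u‖ / 2 := by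
        rw [hξ, map_smul, inner_smul_left, inner_smul_right, hinner_η]
        rw [norm_mul, norm_mul]
        have : ‖(starRingEnd ℂ) a‖ = ‖a‖ := RCLike.norm_conj a
        rw [this, ha, norm_inv, Complex.norm_real, Real.norm_of_nonneg hs2.le]
        have : ‖((‖B u‖ : ℝ) : ℂ)‖ = ‖B u‖ := by
          rw [Complex.norm_real, Real.norm_of_nonneg hBun.le]
        rw [this]
        rw [show (Real.sqrt 2)⁻¹ * ((Real.sqrt 2)⁻¹ * ‖B u‖) = ‖B u‖ / (Real.sqrt 2 * Real.sqrt 2) by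
          field_simp]
        rw [Real.mul_self_sqrt (by norm_num)]
      have hmem : ‖B u‖ / 2 ∈ S := ⟨ξ, hξn, hinner_ξ.symm⟩
      have hle : ‖B u‖ / 2 ≤ numRadius T := le_csSup hbdd hmem
      have hBu_eq : ‖B u‖ = ‖x‖⁻¹ * ‖B x‖ := by
        rw [hu, map_smul, norm_smul, hc, norm_inv, Complex.norm_real,
          Real.norm_of_nonneg hxnorm.le]
      rw [hBu_eq] at hle
      rw [hT] at hle ⊢
      calc ‖B x‖ = ‖x‖ * (‖x‖⁻¹ * ‖B x‖) := by field_simp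
      _ ≤ ‖x‖ * (2 * numRadius (offDiag B C)) := by
          apply mul_le_mul_of_nonneg_left _ hxnorm.le
          linarith
      _ = 2 * numRadius (offDiag B C) * ‖x‖ := by ring

-- lower bound for the C corner
lemma aux_lower2 (B C : H →L[ℂ] H) [Nontrivial H] (hBC : B * C = 0)
    (hS0 : 0 ≤ numRadius (offDiag B C)) :
    ‖C‖ ≤ 2 * numRadius (offDiag B C) := by
  set T := offDiag B C with hT
  set S := {r : ℝ | ∃ x : WithLp 2 (H × H), ‖x‖ = 1 ∧ r = ‖(inner ℂ (T x) x : ℂ)‖} with hS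
  have hbdd : BddAbove S := aux_bddAbove T
  refine opNorm_le_bound _ (by positivity) fun x => ?_
  by_cases hx : x = 0
  · simp [hx]
  · set c : ℂ := ((‖x‖ : ℝ) : ℂ)⁻¹ with hc
    have hxnorm : (0:ℝ) < ‖x‖ := norm_pos_iff.mpr hx
    set u : H := c • x with hu
    have hun : ‖u‖ = 1 := by
      rw [hu, norm_smul, hc, norm_inv, Complex.norm_real, Real.norm_of_nonneg hxnorm.le]
      field_simp
    by_cases hCu : C u = 0
    · have : C x = 0 := by
        have : C x = ((‖x‖ : ℝ) : ℂ) • C u := by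
          rw [hu, map_smul, smul_smul, hc]
          rw [mul_inv_cancel₀ (by exact_mod_cast hxnorm.ne')]
          simp
        rw [this, hCu, smul_zero]
      rw [this, norm_zero]
      positivity
    · have hCun : (0:ℝ) < ‖C u‖ := norm_pos_iff.mpr hCu
      set z : H := ((‖C u‖ : ℝ) : ℂ)⁻¹ • C u with hz
      have hzn : ‖z‖ = 1 := by
        rw [hz, norm_smul, norm_inv, Complex.norm_real, Real.norm_of_nonneg hCun.le]
        field_simp
      set η : WithLp 2 (H × H) := (WithLp.equiv 2 (H × H)).symm (u, z) with hη
      have hηfst : η.fst = u := rfl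
      have hηsnd : η.snd = z := rfl
      have hηn2 : ‖η‖ ^ 2 = 2 := by
        rw [WithLp.prod_norm_sq_eq_of_L2, hηfst, hηsnd, hzn, hun]; norm_num
      have hηn : ‖η‖ = Real.sqrt 2 := by
        rw [← Real.sqrt_sq (norm_nonneg η), hηn2]
      set a : ℂ := ((Real.sqrt 2 : ℝ) : ℂ)⁻¹ with ha
      set ξ : WithLp 2 (H × H) := a • η with hξ
      have hs2 : (0:ℝ) < Real.sqrt 2 := Real.sqrt_pos.mpr (by norm_num)
      have hξn : ‖ξ‖ = 1 := by
        rw [hξ, norm_smul, ha, norm_inv, Complex.norm_real,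
          Real.norm_of_nonneg hs2.le, hηn]
        field_simp
      have hBz : B z = 0 := by
        have : B (C u) = 0 := by
          have := congrArg (fun f => f u) hBC
          simpa [ContinuousLinearMap.mul_apply] using this
        rw [hz, map_smul, this, smul_zero]
      have hinner_η : (inner ℂ (T η) η : ℂ) = (‖C u‖ : ℂ) := by
        rw [WithLp.prod_inner_apply]
        change inner ℂ (T η).fst η.fst + inner ℂ (T η).snd η.snd = _
        have h1 : (T η).fst = B z := by rw [hT, aux_offDiag_fst, hηsnd]
        have h2 : (T η).snd = C u := by rw [hT, aux_offDiag_snd, hηfst]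
        rw [h1, h2, hηfst, hηsnd, hBz, inner_zero_left, zero_add, hz, inner_smul_right,
          inner_self_eq_norm_sq_to_K]
        have hne : ((‖C u‖ : ℝ) : ℂ) ≠ 0 := by exact_mod_cast hCun.ne'
        field_simp
        rfl
      have hinner_ξ : ‖(inner ℂ (T ξ) ξ : ℂ)‖ = ‖C u‖ / 2 := by
        rw [hξ, map_smul, inner_smul_left, inner_smul_right, hinner_η]
        rw [norm_mul, norm_mul]
        have : ‖(starRingEnd ℂ) a‖ = ‖a‖ := RCLike.norm_conj a
        rw [this, ha, norm_inv, Complex.norm_real, Real.norm_of_nonneg hs2.le]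
        have : ‖((‖C u‖ : ℝ) : ℂ)‖ = ‖C u‖ := by
          rw [Complex.norm_real, Real.norm_of_nonneg hCun.le]
        rw [this]
        rw [show (Real.sqrt 2)⁻¹ * ((Real.sqrt 2)⁻¹ * ‖C u‖) = ‖C u‖ / (Real.sqrt 2 * Real.sqrt 2) by
          field_simp]
        rw [Real.mul_self_sqrt (by norm_num)]
      have hmem : ‖C u‖ / 2 ∈ S := ⟨ξ, hξn, hinner_ξ.symm⟩
      have hle : ‖C u‖ / 2 ≤ numRadius T := le_csSup hbdd hmem
      have hCu_eq : ‖C u‖ = ‖x‖⁻¹ * ‖C x‖ := by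
        rw [hu, map_smul, norm_smul, hc, norm_inv, Complex.norm_real,
          Real.norm_of_nonneg hxnorm.le]
      rw [hCu_eq] at hle
      rw [hT] at hle ⊢
      calc ‖C x‖ = ‖x‖ * (‖x‖⁻¹ * ‖C x‖) := by field_simp
      _ ≤ ‖x‖ * (2 * numRadius (offDiag B C)) := by
          apply mul_le_mul_of_nonneg_left _ hxnorm.le
          linarith
      _ = 2 * numRadius (offDiag B C) * ‖x‖ := by ring

-- upper bound for square-zero operators
lemma aux_upper {E : Type*} [NormedAddCommGroup E] [InnerProductSpace ℂ E] [CompleteSpace E]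
    (T : E →L[ℂ] E) (hT2 : ∀ x : E, T (T x) = 0) (M : ℝ) (hM0 : 0 ≤ M)
    (hM : ∀ x : E, ‖T x‖ ≤ M * ‖x‖) :
    ∀ r ∈ {r : ℝ | ∃ x : E, ‖x‖ = 1 ∧ r = ‖(inner ℂ (T x) x : ℂ)‖}, r ≤ M / 2 := by
  rintro r ⟨ξ, hξ, rfl⟩
  set K : Submodule ℂ E := LinearMap.ker (T : E →ₗ[ℂ] E) with hK
  haveI : CompleteSpace K := (ContinuousLinearMap.isClosed_ker T).completeSpace_coe
  set u : E := (K.orthogonalProjectionOnto ξ : E) with hu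
  have huK : u ∈ K := SetLike.coe_mem _
  set v : E := ξ - u with hv
  have hvK : v ∈ Kᗮ := K.sub_starProjection_mem_orthogonal ξ
  have hξuv : ξ = u + v := by rw [hv]; abel
  have hTu : T u = 0 := huK
  have hTvK : T v ∈ K := by
    show T (T v) = 0
    exact hT2 v
  have hTξ : T ξ = T v := by rw [hξuv, map_add, hTu, zero_add]
  have huv : (inner ℂ u v : ℂ) = 0 := (Submodule.mem_orthogonal K v).mp hvK u huK
  have hTvv : (inner ℂ (T v) v : ℂ) = 0 := (Submodule.mem_orthogonal K v).mp hvK (T v) hTvK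
  have hid : (inner ℂ (T ξ) ξ : ℂ) = inner ℂ (T v) u := by
    rw [hTξ, hξuv, inner_add_right, hTvv, add_zero]
  have hpyth : ‖u‖ ^ 2 + ‖v‖ ^ 2 = 1 := by
    have := norm_add_sq_eq_norm_sq_add_norm_sq_of_inner_eq_zero u v huv
    rw [← hξuv, hξ] at this
    simpa [sq] using this.symm
  have hTv : ‖T v‖ ≤ M * ‖v‖ := hM v
  calc ‖(inner ℂ (T ξ) ξ : ℂ)‖ = ‖(inner ℂ (T v) u : ℂ)‖ := by rw [hid]
  _ ≤ ‖T v‖ * ‖u‖ := norm_inner_le_norm _ _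
  _ ≤ M * ‖v‖ * ‖u‖ := by
      apply mul_le_mul_of_nonneg_right hTv (norm_nonneg u)
  _ ≤ M / 2 := by nlinarith [norm_nonneg u, norm_nonneg v, sq_nonneg (‖u‖ - ‖v‖)]

end Aux

theorem stmt_8 (B C : H →L[ℂ] H) (h1 : opAbs B * opAbs (adjoint C) = 0)
    (h2 : opAbs (adjoint B) * opAbs C = 0) :
    numRadius (offDiag B C) ^ 2 =
      (1 / 4) * max ‖opAbs B ^ 2 + opAbs (adjoint C) ^ 2‖ ‖opAbs (adjoint B) ^ 2 + opAbs C ^ 2‖ := by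
  rcases subsingleton_or_nontrivial H with hsub | hnt
  · -- trivial Hilbert space
    haveI : Subsingleton (WithLp 2 (H × H)) :=
      ⟨fun a b => (WithLp.equiv 2 (H × H)).injective (Subsingleton.elim _ _)⟩
    haveI : Subsingleton (H →L[ℂ] H) :=
      ⟨fun f g => ContinuousLinearMap.ext fun x => Subsingleton.elim _ _⟩
    have hempty : {r : ℝ | ∃ x : WithLp 2 (H × H), ‖x‖ = 1 ∧
        r = ‖(inner ℂ ((offDiag B C) x) x : ℂ)‖} = ∅ := by
      rw [Set.eq_empty_iff_forall_notMem]
      rintro r ⟨x, hx, -⟩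
      rw [Subsingleton.elim x 0, norm_zero] at hx
      norm_num at hx
    have hL : numRadius (offDiag B C) = 0 := by
      rw [numRadius, hempty, Real.sSup_empty]
    have e1 : opAbs B ^ 2 + opAbs (adjoint C) ^ 2 = 0 := Subsingleton.elim _ _
    have e2 : opAbs (adjoint B) ^ 2 + opAbs C ^ 2 = 0 := Subsingleton.elim _ _
    rw [hL, e1, e2, norm_zero]
    norm_num
  · -- main case
    have hBC : B * C = 0 := by
      apply aux_key_mul_zero
      have := h1
      rw [opAbs, opAbs, adjoint_adjoint, ← star_eq_adjoint, ← star_eq_adjoint] at this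
      exact this
    have hCB : C * B = 0 := by
      apply aux_key_mul_zero
      have := h2
      rw [opAbs, opAbs, adjoint_adjoint, ← star_eq_adjoint, ← star_eq_adjoint] at this
      -- this : CFC.sqrt (B * star B) * CFC.sqrt (star C * C) = 0
      have hflip := congrArg star this
      rw [star_mul, star_zero] at hflip
      rw [(IsSelfAdjoint.of_nonneg (CFC.sqrt_nonneg (star C * C))).star_eq,
        (IsSelfAdjoint.of_nonneg (CFC.sqrt_nonneg (B * star B))).star_eq] at hflip
      exact hflip
    -- squares of the absolute values
    have e1 : opAbs B ^ 2 = star B * B := by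
      rw [opAbs, ← star_eq_adjoint]
      exact CFC.sq_sqrt _ (star_mul_self_nonneg B)
    have e2 : opAbs (adjoint C) ^ 2 = C * star C := by
      rw [opAbs, adjoint_adjoint, ← star_eq_adjoint]
      exact CFC.sq_sqrt _ (mul_star_self_nonneg C)
    have e3 : opAbs (adjoint B) ^ 2 = B * star B := by
      rw [opAbs, adjoint_adjoint, ← star_eq_adjoint]
      exact CFC.sq_sqrt _ (mul_star_self_nonneg B)
    have e4 : opAbs C ^ 2 = star C * C := by
      rw [opAbs, ← star_eq_adjoint]
      exact CFC.sq_sqrt _ (star_mul_self_nonneg C)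
    set M : ℝ := max ‖B‖ ‖C‖ with hM
    have hM0 : 0 ≤ M := le_trans (norm_nonneg B) (le_max_left _ _)
    -- right-hand side norms
    have hmaxsq : max (‖B‖ ^ 2) (‖C‖ ^ 2) = M ^ 2 := by
      rcases le_total ‖B‖ ‖C‖ with h | h
      · rw [hM, max_eq_right h, max_eq_right (by nlinarith [norm_nonneg B, norm_nonneg C])]
      · rw [hM, max_eq_left h, max_eq_left (by nlinarith [norm_nonneg B, norm_nonneg C])]
    have hnorm1 : ‖opAbs B ^ 2 + opAbs (adjoint C) ^ 2‖ = M ^ 2 := by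
      rw [e1, e2]
      rw [aux_norm_add_of_orth _ _ (star_mul_self_nonneg B) (mul_star_self_nonneg C) ?_]
      · rw [CStarRing.norm_star_mul_self, CStarRing.norm_self_mul_star, ← sq, ← sq]
        exact hmaxsq
      · calc (star B * B) * (C * star C) = star B * (B * C) * star C := by noncomm_ring
        _ = 0 := by rw [hBC]; simp
    have hnorm2 : ‖opAbs (adjoint B) ^ 2 + opAbs C ^ 2‖ = M ^ 2 := by
      rw [e3, e4]
      rw [aux_norm_add_of_orth _ _ (mul_star_self_nonneg B) (star_mul_self_nonneg C) ?_]
      · rw [CStarRing.norm_self_mul_star, CStarRing.norm_star_mul_self, ← sq, ← sq]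
        exact hmaxsq
      · have hstar : star B * star C = star (C * B) := (star_mul C B).symm
        calc (B * star B) * (star C * C) = B * (star B * star C) * C := by noncomm_ring
        _ = B * star (C * B) * C := by rw [hstar]
        _ = 0 := by rw [hCB]; simp
    -- the operator T and its properties
    set T := offDiag B C with hT
    have hT2 : ∀ ξ : WithLp 2 (H × H), T (T ξ) = 0 := by
      intro ξ
      have hf : (T (T ξ)).fst = 0 := by
        rw [hT, aux_offDiag_fst, aux_offDiag_snd, ← ContinuousLinearMap.mul_apply, hBC]
        rfl
      have hs : (T (T ξ)).snd = 0 := by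
        rw [hT, aux_offDiag_snd, aux_offDiag_fst, ← ContinuousLinearMap.mul_apply, hCB]
        rfl
      exact (WithLp.equiv 2 (H × H)).injective (Prod.ext hf hs)
    have hMb : ∀ ξ : WithLp 2 (H × H), ‖T ξ‖ ≤ M * ‖ξ‖ := by
      intro ξ
      have hsq : ‖T ξ‖ ^ 2 ≤ (M * ‖ξ‖) ^ 2 := by
        rw [WithLp.prod_norm_sq_eq_of_L2, hT, aux_offDiag_fst, aux_offDiag_snd]
        have hB : ‖B ξ.snd‖ ≤ M * ‖ξ.snd‖ :=
          le_trans (B.le_opNorm _) (mul_le_mul_of_nonneg_right (le_max_left _ _) (norm_nonneg _))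
        have hC : ‖C ξ.fst‖ ≤ M * ‖ξ.fst‖ :=
          le_trans (C.le_opNorm _) (mul_le_mul_of_nonneg_right (le_max_right _ _) (norm_nonneg _))
        have hξsq : ‖ξ‖ ^ 2 = ‖ξ.fst‖ ^ 2 + ‖ξ.snd‖ ^ 2 := WithLp.prod_norm_sq_eq_of_L2 ξ
        nlinarith [norm_nonneg (B ξ.snd), norm_nonneg (C ξ.fst), norm_nonneg ξ.fst,
          norm_nonneg ξ.snd, norm_nonneg ξ]
      have := Real.sqrt_le_sqrt hsq
      rwa [Real.sqrt_sq (norm_nonneg _), Real.sqrt_sq (by positivity)] at this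
    -- the set S
    set S := {r : ℝ | ∃ x : WithLp 2 (H × H), ‖x‖ = 1 ∧ r = ‖(inner ℂ (T x) x : ℂ)‖} with hSdef
    have hbdd : BddAbove S := aux_bddAbove T
    have hSne : S.Nonempty := by
      obtain ⟨x0, hx0⟩ := exists_ne (0 : H)
      have hx0n : (0:ℝ) < ‖x0‖ := norm_pos_iff.mpr hx0
      set u0 : H := (((‖x0‖ : ℝ) : ℂ))⁻¹ • x0 with hu0
      have hu0n : ‖u0‖ = 1 := by
        rw [hu0, norm_smul, norm_inv, Complex.norm_real, Real.norm_of_nonneg hx0n.le]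
        field_simp
      set ξ0 : WithLp 2 (H × H) := (WithLp.equiv 2 (H × H)).symm (u0, 0) with hξ0
      have hξ0n : ‖ξ0‖ = 1 := by
        apply aux_sq_eq_one (norm_nonneg _)
        rw [WithLp.prod_norm_sq_eq_of_L2]
        have h1 : ξ0.fst = u0 := rfl
        have h2 : ξ0.snd = (0 : H) := rfl
        rw [h1, h2, hu0n, norm_zero]
        norm_num
      exact ⟨‖(inner ℂ (T ξ0) ξ0 : ℂ)‖, ξ0, hξ0n, rfl⟩
    have hnum : numRadius T = sSup S := rfl
    have hS0 : 0 ≤ numRadius T := by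
      obtain ⟨r0, hr0⟩ := hSne
      have hr0' : 0 ≤ r0 := by
        obtain ⟨x, -, rfl⟩ := hr0
        exact norm_nonneg _
      rw [hnum]
      exact le_trans hr0' (le_csSup hbdd hr0)
    have hupper : numRadius T ≤ M / 2 := by
      rw [hnum]
      exact csSup_le hSne (aux_upper T hT2 M hM0 hMb)
    have hlower : M ≤ 2 * numRadius T := by
      apply max_le
      · exact aux_lower B C hCB hS0
      · exact aux_lower2 B C hBC hS0
    have heq : numRadius T = M / 2 := le_antisymm hupper (by linarith)
    rw [heq, hnorm1, hnorm2, max_self]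
    ring
end

section
/- Let x, y, e be elements of a complex Hilbert space H with ‖e‖ = 1, and let 0 ≤ α ≤ 1. Then |⟨x, e⟩·⟨e, y⟩|² ≤ ((1+α)/4)·‖x‖²·‖y‖² + ((1−α)/4)·|⟨x, y⟩|² + (1/2)·‖x‖·‖y‖·|⟨x, y⟩|. -/
open scoped ComplexConjugate

lemma buzano {H : Type*} [NormedAddCommGroup H] [InnerProductSpace ℂ H]
    (x y e : H) (he : ‖e‖ = 1) :
    ‖(inner ℂ x e : ℂ) * (inner ℂ e y : ℂ)‖ ≤ (‖x‖ * ‖y‖ + ‖(inner ℂ x y : ℂ)‖) / 2 := by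
  have hkey : (inner ℂ x e : ℂ) * inner ℂ e y
      = ((inner ℂ x y : ℂ) + inner ℂ x ((2 * (inner ℂ e y : ℂ)) • e - y)) / 2 := by
    rw [inner_sub_right, inner_smul_right]; ring
  have hnorm : ‖(2 * (inner ℂ e y : ℂ)) • e - y‖ = ‖y‖ := by
    have h2 : ‖(2 * (inner ℂ e y : ℂ)) • e - y‖ ^ 2 = ‖y‖ ^ 2 := by
      rw [@norm_sub_sq ℂ, norm_smul, he, inner_smul_left]
      simp only [map_mul, mul_one]
      have hc : (starRingEnd ℂ) (inner ℂ e y : ℂ) * (inner ℂ e y : ℂ)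
          = (‖(inner ℂ e y : ℂ)‖ : ℂ) ^ 2 := by
        rw [Complex.conj_mul']
      have h2c : (starRingEnd ℂ) (2 : ℂ) = 2 := by rw [Complex.conj_ofNat]
      rw [h2c, mul_assoc, hc]
      have : Complex.re ((2:ℂ) * ((‖(inner ℂ e y : ℂ)‖ : ℂ) ^ 2))
          = 2 * ‖(inner ℂ e y : ℂ)‖ ^ 2 := by norm_cast
      rw [show RCLike.re ((2:ℂ) * ((‖(inner ℂ e y : ℂ)‖ : ℂ) ^ 2)) =
          Complex.re ((2:ℂ) * ((‖(inner ℂ e y : ℂ)‖ : ℂ) ^ 2)) from rfl, this, norm_mul]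
      have hn2 : ‖(2:ℂ)‖ = 2 := by simp
      rw [hn2]
      ring
    have h0 : 0 ≤ ‖(2 * (inner ℂ e y : ℂ)) • e - y‖ := norm_nonneg _
    nlinarith [norm_nonneg y]
  calc ‖(inner ℂ x e : ℂ) * inner ℂ e y‖
      = ‖((inner ℂ x y : ℂ) + inner ℂ x ((2 * (inner ℂ e y : ℂ)) • e - y)) / 2‖ := by rw [hkey]
    _ = ‖(inner ℂ x y : ℂ) + inner ℂ x ((2 * (inner ℂ e y : ℂ)) • e - y)‖ / 2 := by
        rw [norm_div]; norm_num
    _ ≤ (‖(inner ℂ x y : ℂ)‖ + ‖(inner ℂ x ((2 * (inner ℂ e y : ℂ)) • e - y) : ℂ)‖) / 2 := by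
        gcongr; exact norm_add_le _ _
    _ ≤ (‖x‖ * ‖y‖ + ‖(inner ℂ x y : ℂ)‖) / 2 := by
        have := norm_inner_le_norm (𝕜 := ℂ) x ((2 * (inner ℂ e y : ℂ)) • e - y)
        rw [hnorm] at this; linarith

theorem stmt_11 {H : Type*} [NormedAddCommGroup H] [InnerProductSpace ℂ H]
    (x y e : H) (he : ‖e‖ = 1) (α : ℝ) (hα0 : 0 ≤ α) (hα1 : α ≤ 1) :
    ‖(inner ℂ x e : ℂ) * (inner ℂ e y : ℂ)‖ ^ 2 ≤
      ((1 + α) / 4) * (‖x‖ ^ 2 * ‖y‖ ^ 2) + ((1 - α) / 4) * ‖(inner ℂ x y : ℂ)‖ ^ 2 +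
        (1 / 2) * (‖x‖ * ‖y‖ * ‖(inner ℂ x y : ℂ)‖) := by
  have hb := buzano x y e he
  have hcs := norm_inner_le_norm (𝕜 := ℂ) x y
  have h1 : (0:ℝ) ≤ ‖(inner ℂ x e : ℂ) * (inner ℂ e y : ℂ)‖ := norm_nonneg _
  have h2 : (0:ℝ) ≤ ‖(inner ℂ x y : ℂ)‖ := norm_nonneg _
  have hsq : ‖(inner ℂ x e : ℂ) * (inner ℂ e y : ℂ)‖ ^ 2
      ≤ ((‖x‖ * ‖y‖ + ‖(inner ℂ x y : ℂ)‖) / 2) ^ 2 := by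
    apply pow_le_pow_left₀ h1 hb
  have hB : ‖(inner ℂ x y : ℂ)‖ ^ 2 ≤ (‖x‖ * ‖y‖) ^ 2 := by nlinarith
  nlinarith [mul_nonneg hα0 (sub_nonneg.mpr hB)]
end

section
/- Let B ∈ B(H) and let 0 ≤ α ≤ 1. Then ((1+α)/8)·‖|B|⁴ + |B*|⁴‖ + ((1−α)/4)·w(B²)² + (1/4)·‖|B|² + |B*|²‖·w(B²) ≤ (1/2)·‖|B|⁴ + |B*|⁴‖. -/
open ContinuousLinearMap

variable {H : Type*} [NormedAddCommGroup H] [InnerProductSpace ℂ H] [CompleteSpace H]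

lemma opAbs_sq (B : H →L[ℂ] H) : opAbs B ^ 2 = adjoint B * B :=
  CFC.sq_sqrt _ (by rw [← star_eq_adjoint]; exact star_mul_self_nonneg B)

lemma opAbs_pow_four (B : H →L[ℂ] H) : opAbs B ^ 4 = (adjoint B * B) ^ 2 := by
  rw [show (4 : ℕ) = 2 * 2 from rfl, pow_mul, opAbs_sq]

lemma numRadius_nonneg {E : Type*} [NormedAddCommGroup E] [InnerProductSpace ℂ E]
    (T : E →L[ℂ] E) : 0 ≤ numRadius T := by
  apply Real.sSup_nonneg
  rintro r ⟨x, -, rfl⟩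
  exact norm_nonneg _

lemma numRadius_sq_le (B : H →L[ℂ] H) :
    numRadius (B ^ 2) ≤ ‖(opAbs B ^ 2 + opAbs (adjoint B) ^ 2 : H →L[ℂ] H)‖ / 2 := by
  set A : H →L[ℂ] H := adjoint B * B with hA
  set C : H →L[ℂ] H := B * adjoint B with hC
  have hsum : opAbs B ^ 2 + opAbs (adjoint B) ^ 2 = A + C := by
    rw [opAbs_sq, opAbs_sq, adjoint_adjoint]
  rw [hsum]
  apply Real.sSup_le
  · rintro r ⟨x, hx, rfl⟩
    -- ⟨B² x, x⟩ = ⟨B x, B* x⟩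
    have h1 : (inner ℂ ((B ^ 2) x) x : ℂ) = inner ℂ (B x) (adjoint B x) := by
      rw [adjoint_inner_right, sq, ContinuousLinearMap.mul_apply]
    -- ⟨(A+C) x, x⟩ = ‖Bx‖² + ‖B*x‖²
    have h2a : (inner ℂ (A x) x : ℂ) = ((‖B x‖ ^ 2 : ℝ) : ℂ) := by
      rw [hA, ContinuousLinearMap.mul_apply, adjoint_inner_left, inner_self_eq_norm_sq_to_K]
      norm_cast
    have h2b : (inner ℂ (C x) x : ℂ) = ((‖adjoint B x‖ ^ 2 : ℝ) : ℂ) := by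
      rw [hC, ContinuousLinearMap.mul_apply, ← adjoint_inner_right B (adjoint B x) x,
        inner_self_eq_norm_sq_to_K]
      norm_cast
    have h2 : (inner ℂ ((A + C) x) x : ℂ) = ((‖B x‖ ^ 2 + ‖adjoint B x‖ ^ 2 : ℝ) : ℂ) := by
      rw [add_apply, inner_add_left, h2a, h2b]
      push_cast; ring
    have h3 : ‖B x‖ ^ 2 + ‖adjoint B x‖ ^ 2 ≤ ‖A + C‖ := by
      have := norm_inner_le_norm (𝕜 := ℂ) ((A + C) x) x
      rw [h2] at this
      have h4 : ‖(((‖B x‖ ^ 2 + ‖adjoint B x‖ ^ 2 : ℝ)) : ℂ)‖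
          = ‖B x‖ ^ 2 + ‖adjoint B x‖ ^ 2 := by
        rw [Complex.norm_real]; exact Real.norm_of_nonneg (by positivity)
      rw [h4] at this
      calc ‖B x‖ ^ 2 + ‖adjoint B x‖ ^ 2 ≤ ‖(A + C) x‖ * ‖x‖ := this
        _ ≤ ‖A + C‖ * ‖x‖ * ‖x‖ := by
            gcongr
            exact (A + C).le_opNorm x
        _ = ‖A + C‖ := by rw [hx]; ring
    have h5 : ‖(inner ℂ ((B ^ 2) x) x : ℂ)‖ ≤ ‖B x‖ * ‖adjoint B x‖ := by
      rw [h1]; exact norm_inner_le_norm (𝕜 := ℂ) _ _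
    nlinarith [sq_nonneg (‖B x‖ - ‖adjoint B x‖), norm_nonneg (B x), norm_nonneg (adjoint B x)]
  · positivity

lemma norm_sq_le_two (B : H →L[ℂ] H) :
    ‖(opAbs B ^ 2 + opAbs (adjoint B) ^ 2 : H →L[ℂ] H)‖ ^ 2
      ≤ 2 * ‖(opAbs B ^ 4 + opAbs (adjoint B) ^ 4 : H →L[ℂ] H)‖ := by
  set A : H →L[ℂ] H := adjoint B * B with hA
  set C : H →L[ℂ] H := B * adjoint B with hC
  have hAnn : (0 : H →L[ℂ] H) ≤ A := by rw [hA, ← star_eq_adjoint]; exact star_mul_self_nonneg B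
  have hCnn : (0 : H →L[ℂ] H) ≤ C := by
    rw [hC, ← star_eq_adjoint]; exact mul_star_self_nonneg B
  have hAsa : IsSelfAdjoint A := by rw [hA, ← star_eq_adjoint]; exact IsSelfAdjoint.star_mul_self B
  have hCsa : IsSelfAdjoint C := by rw [hC, ← star_eq_adjoint]; exact IsSelfAdjoint.mul_star_self B
  have hsum2 : opAbs B ^ 2 + opAbs (adjoint B) ^ 2 = A + C := by
    rw [opAbs_sq, opAbs_sq, adjoint_adjoint]
  have hsum4 : opAbs B ^ 4 + opAbs (adjoint B) ^ 4 = A ^ 2 + C ^ 2 := by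
    rw [opAbs_pow_four, opAbs_pow_four, adjoint_adjoint]
  rw [hsum2, hsum4]
  have hkey : (A + C) ^ 2 ≤ (A ^ 2 + C ^ 2) + (A ^ 2 + C ^ 2) := by
    have hdiff : (A ^ 2 + C ^ 2) + (A ^ 2 + C ^ 2) - (A + C) ^ 2 = (A - C) ^ 2 := by
      noncomm_ring
    have hsq : (0 : H →L[ℂ] H) ≤ (A - C) ^ 2 := by
      have : (A - C) ^ 2 = star (A - C) * (A - C) := by
        rw [sq, (hAsa.sub hCsa).star_eq]
      rw [this]
      exact star_mul_self_nonneg _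
    rw [← sub_nonneg, hdiff]
    exact hsq
  have hACsa : IsSelfAdjoint (A + C) := hAsa.add hCsa
  have hnorm_sq : ‖(A + C) ^ 2‖ = ‖A + C‖ ^ 2 := by
    rw [sq, sq]
    nth_rewrite 1 [← hACsa.star_eq]
    exact CStarRing.norm_star_mul_self (x := A + C)
  have hmono : ‖(A + C) ^ 2‖ ≤ ‖(A ^ 2 + C ^ 2) + (A ^ 2 + C ^ 2)‖ := by
    refine CStarAlgebra.norm_le_norm_of_nonneg_of_le ?_ hkey
    have hACnn : (0 : H →L[ℂ] H) ≤ A + C := add_nonneg hAnn hCnn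
    have : (A + C) ^ 2 = star (A + C) * (A + C) := by rw [sq, hACsa.star_eq]
    rw [this]
    exact star_mul_self_nonneg _
  calc ‖A + C‖ ^ 2 = ‖(A + C) ^ 2‖ := hnorm_sq.symm
    _ ≤ ‖(A ^ 2 + C ^ 2) + (A ^ 2 + C ^ 2)‖ := hmono
    _ ≤ 2 * ‖A ^ 2 + C ^ 2‖ := by
        have := norm_add_le (A ^ 2 + C ^ 2) (A ^ 2 + C ^ 2)
        linarith

theorem stmt_14 (B : H →L[ℂ] H) (α : ℝ) (hα0 : 0 ≤ α) (hα1 : α ≤ 1) :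
    ((1 + α) / 8) * ‖opAbs B ^ 4 + opAbs (adjoint B) ^ 4‖ +
        ((1 - α) / 4) * numRadius (B ^ 2) ^ 2 +
        (1 / 4) * ‖opAbs B ^ 2 + opAbs (adjoint B) ^ 2‖ * numRadius (B ^ 2) ≤
      (1 / 2) * ‖opAbs B ^ 4 + opAbs (adjoint B) ^ 4‖ := by
  set w := numRadius (B ^ 2) with hw
  set M := ‖(opAbs B ^ 2 + opAbs (adjoint B) ^ 2 : H →L[ℂ] H)‖ with hM
  set N := ‖(opAbs B ^ 4 + opAbs (adjoint B) ^ 4 : H →L[ℂ] H)‖ with hN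
  have hw0 : 0 ≤ w := numRadius_nonneg _
  have hwM : w ≤ M / 2 := numRadius_sq_le B
  have hMN : M ^ 2 ≤ 2 * N := norm_sq_le_two B
  have hM0 : 0 ≤ M := norm_nonneg _
  have h1α : (0 : ℝ) ≤ 1 - α := by linarith
  have h3α : (0 : ℝ) ≤ 3 - α := by linarith
  have hww : w ^ 2 ≤ (M / 2) ^ 2 := by
    apply pow_le_pow_left₀ hw0 hwM 2
  have hMw : M * w ≤ M * (M / 2) := mul_le_mul_of_nonneg_left hwM hM0
  nlinarith [mul_nonneg h1α (sub_nonneg.2 hww), mul_nonneg h3α (sub_nonneg.2 hMN)]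
end
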